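/- arXiv:1204.3409 — 2 statements merged into one kernel-verified Lean document; each statement's English description precedes it below -/
import Mathlib

section
/- Fix integers n ≥ 2 and 1 ≤ a ≤ n−1 with gcd(a,n) = 1. For an integer 1 ≤ q ≤ n−1 with gcd(q,n) = 1, let q' be the unique integer with 1 ≤ q' ≤ n−1 and q·q' ≡ 1 (mod n), let (b₁,…,b_l) be the unique list of integers bᵢ ≥ 2 with Hirzebruch–Jung continued fraction value [b₁,…,b_l] = n/q, and set γ(1/n(1,q)) := (1/6)·((q + q')/n + Σᵢ(bᵢ − 3)). Then γ(1/n(1,a)) = −γ(1/n(1,n−a)). -/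
/-- The Hirzebruch–Jung continued fraction value of a list of integers:
`hjcf [b₁, …, b_l] = b₁ − 1/(b₂ − 1/(⋯ − 1/b_l))`. -/
def hjcf : List ℤ → ℚ
  | [] => 0
  | b :: l => (b : ℚ) - 1 / hjcf l

lemma hjcf_cons (x : ℤ) (t : List ℤ) : hjcf (x :: t) = (x : ℚ) - 1 / hjcf t := rfl

lemma one_lt_hjcf : ∀ b : List ℤ, b ≠ [] → (∀ x ∈ b, 2 ≤ x) → 1 < hjcf b := by
  intro b
  induction b with
  | nil => intro h; exact absurd rfl h
  | cons x t ih =>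
    intro _ h2
    have hx : (2:ℚ) ≤ (x:ℚ) := by exact_mod_cast h2 x (by simp)
    rw [hjcf_cons]
    by_cases ht : t = []
    · subst ht; simp [hjcf]; linarith
    · have h1 : 1 < hjcf t := ih ht (fun y hy => h2 y (by simp [hy]))
      have h0 : 0 < hjcf t := by linarith
      have : 1 / hjcf t < 1 := by rw [div_lt_one h0]; linarith
      have : 0 < 1 / hjcf t := by positivity
      linarith

lemma hjcf_cons_lt (x : ℤ) (t : List ℤ) (ht : t ≠ []) (h2 : ∀ y ∈ t, 2 ≤ y) :
    hjcf (x :: t) < (x : ℚ) := by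
  have h1 : 1 < hjcf t := one_lt_hjcf t ht h2
  have : 0 < 1 / hjcf t := by positivity
  rw [hjcf_cons]; linarith

lemma sum_cast (b : List ℤ) :
    (b.map (fun x => (x : ℚ) - 3)).sum = (List.map (fun x : ℤ => (x : ℚ) - 3) b).sum := by
  induction b with
  | nil => rfl
  | cons x t ih =>
    simp only [List.map_cons, List.sum_cons] at ih ⊢
    simp [← ih]

lemma key : ∀ N : ℕ, ∀ b c : List ℤ, b.length + c.length ≤ N → b ≠ [] → c ≠ [] →
    (∀ x ∈ b, 2 ≤ x) → (∀ x ∈ c, 2 ≤ x) →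
    hjcf c * (hjcf b - 1) = hjcf b →
    (List.map (fun x : ℤ => (x : ℚ) - 3) b).sum + (List.map (fun x : ℤ => (x : ℚ) - 3) c).sum = -2 := by
  intro N
  induction N with
  | zero =>
    intro b c hlen hbne hcne
    have := List.length_pos_iff.mpr hbne
    omega
  | succ N ih =>
    intro b c hlen hbne hcne hb2 hc2 hrel
    obtain ⟨b₁, t, rfl⟩ := List.exists_cons_of_ne_nil hbne
    obtain ⟨c₁, s, rfl⟩ := List.exists_cons_of_ne_nil hcne
    have ht2 : ∀ y ∈ t, 2 ≤ y := fun y hy => hb2 y (by simp [hy])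
    have hs2 : ∀ y ∈ s, 2 ≤ y := fun y hy => hc2 y (by simp [hy])
    have hb₁ : (2:ℚ) ≤ (b₁:ℚ) := by exact_mod_cast hb2 b₁ (by simp)
    have hc₁ : (2:ℚ) ≤ (c₁:ℚ) := by exact_mod_cast hc2 c₁ (by simp)
    have hq : 1 < hjcf (b₁ :: t) := one_lt_hjcf _ (by simp) hb2
    have hr : 1 < hjcf (c₁ :: s) := one_lt_hjcf _ (by simp) hc2
    set q := hjcf (b₁ :: t) with hq_def
    set r := hjcf (c₁ :: s) with hr_def
    rcases lt_trichotomy q 2 with hlt | heq | hgt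
    · -- q < 2 : reduce on the b side
      have hr2 : 2 < r := by nlinarith
      have htne : t ≠ [] := by
        intro h; subst h
        have : q = (b₁:ℚ) := by rw [hq_def, hjcf_cons]; simp [hjcf]
        linarith
      have hT : 1 < hjcf t := one_lt_hjcf t htne ht2
      have hTq : q = (b₁:ℚ) - 1 / hjcf t := by rw [hq_def, hjcf_cons]
      have hb₁2 : b₁ = 2 := by
        have h1 : (b₁:ℚ) - 1 < q := by
          have : 1 / hjcf t < 1 := by rw [div_lt_one (by linarith)]; linarith
          linarith
        have : (b₁:ℚ) < 3 := by linarith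
        have : b₁ < 3 := by exact_mod_cast this
        have := hb2 b₁ (by simp); omega
      have hc₁3 : 3 ≤ c₁ := by
        have hrle : r ≤ (c₁:ℚ) := by
          by_cases hs : s = []
          · subst hs
            have : r = (c₁:ℚ) := by rw [hr_def, hjcf_cons]; simp [hjcf]
            linarith
          · exact le_of_lt (hjcf_cons_lt c₁ s hs hs2)
        have : (2:ℚ) < (c₁:ℚ) := lt_of_lt_of_le hr2 hrle
        have : 2 < c₁ := by exact_mod_cast this
        omega
      -- new pair: t, (c₁-1)::s
      have hcnew : hjcf ((c₁ - 1) :: s) = r - 1 := by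
        rw [hjcf_cons, hr_def, hjcf_cons]; push_cast; ring
      have eT : hjcf t * (2 - q) = 1 := by
        have hT0 : hjcf t ≠ 0 := by linarith
        have h2q : 2 - q = 1 / hjcf t := by rw [hTq, hb₁2]; push_cast; ring
        rw [h2q]; field_simp
      have hrel' : hjcf ((c₁ - 1) :: s) * (hjcf t - 1) = hjcf t := by
        rw [hcnew]
        linear_combination hjcf t * hrel + r * eT - eT
      have hcs2 : ∀ x ∈ (c₁ - 1) :: s, 2 ≤ x := by
        intro x hx
        rcases List.mem_cons.mp hx with h | h
        · subst h; omega
        · exact hs2 x h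
      have hIH := ih t ((c₁ - 1) :: s) (by simp at hlen ⊢; omega) htne (by simp)
        ht2 hcs2 hrel'
      simp only [List.map_cons, List.sum_cons] at hIH ⊢
      have hcast : ((c₁ - 1 : ℤ) : ℚ) = (c₁ : ℚ) - 1 := by push_cast; ring
      rw [hcast] at hIH
      have hbcast : (b₁ : ℚ) = 2 := by rw [hb₁2]; norm_num
      rw [hbcast]
      linarith
    · -- q = 2 : base case
      have htne : t = [] := by
        by_contra h
        have h1 : q < (b₁:ℚ) := hjcf_cons_lt b₁ t h ht2
        have h2' : (b₁:ℚ) - 1 < q := by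
          have hT : 1 < hjcf t := one_lt_hjcf t h ht2
          have : 1 / hjcf t < 1 := by rw [div_lt_one (by linarith)]; linarith
          rw [hq_def, hjcf_cons]; linarith
        have h3 : b₁ < 3 := by exact_mod_cast (by linarith : (b₁:ℚ) < 3)
        have h4 : 2 < b₁ := by exact_mod_cast (by linarith : (2:ℚ) < (b₁:ℚ))
        omega
      subst htne
      have hqb : q = (b₁:ℚ) := by rw [hq_def, hjcf_cons]; simp [hjcf]
      have hb₁2 : b₁ = 2 := by
        have : (b₁:ℚ) = 2 := by linarith [hqb, heq]
        exact_mod_cast this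
      have hrval : r = 2 := by
        rw [heq] at hrel; linarith
      have hsne : s = [] := by
        by_contra h
        have h1 : r < (c₁:ℚ) := hjcf_cons_lt c₁ s h hs2
        have hT : 1 < hjcf s := one_lt_hjcf s h hs2
        have h2' : (c₁:ℚ) - 1 < r := by
          have : 1 / hjcf s < 1 := by rw [div_lt_one (by linarith)]; linarith
          rw [hr_def, hjcf_cons]; linarith
        rw [hrval] at h1 h2'
        have h3 : 2 < c₁ := by exact_mod_cast h1
        have h4 : (c₁:ℚ) < 3 := by linarith
        have h5 : c₁ < 3 := by exact_mod_cast h4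
        omega
      subst hsne
      have hrc : r = (c₁:ℚ) := by rw [hr_def, hjcf_cons]; simp [hjcf]
      have hc₁2 : c₁ = 2 := by
        have : (c₁:ℚ) = 2 := by linarith [hrc, hrval]
        exact_mod_cast this
      subst hb₁2; subst hc₁2
      norm_num
    · -- q > 2 : reduce on the c side
      have hrlt2 : r < 2 := by nlinarith
      have hsne : s ≠ [] := by
        intro h; subst h
        have : r = (c₁:ℚ) := by rw [hr_def, hjcf_cons]; simp [hjcf]
        linarith
      have hS : 1 < hjcf s := one_lt_hjcf s hsne hs2
      have hc₁2 : c₁ = 2 := by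
        have h2' : (c₁:ℚ) - 1 < r := by
          have : 1 / hjcf s < 1 := by rw [div_lt_one (by linarith)]; linarith
          rw [hr_def, hjcf_cons]; linarith
        have : (c₁:ℚ) < 3 := by linarith
        have : c₁ < 3 := by exact_mod_cast this
        have := hc2 c₁ (by simp); omega
      have hb₁3 : 3 ≤ b₁ := by
        have hqle : q ≤ (b₁:ℚ) := by
          by_cases h : t = []
          · subst h
            have : q = (b₁:ℚ) := by rw [hq_def, hjcf_cons]; simp [hjcf]
            linarith
          · exact le_of_lt (hjcf_cons_lt b₁ t h ht2)
        have : (2:ℚ) < (b₁:ℚ) := lt_of_lt_of_le hgt hqle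
        have : 2 < b₁ := by exact_mod_cast this
        omega
      have hbnew : hjcf ((b₁ - 1) :: t) = q - 1 := by
        rw [hjcf_cons, hq_def, hjcf_cons]; push_cast; ring
      have eS : hjcf s * (2 - r) = 1 := by
        have hS0 : hjcf s ≠ 0 := by linarith
        have h2r : 2 - r = 1 / hjcf s := by rw [hr_def, hjcf_cons, hc₁2]; push_cast; ring
        rw [h2r]; field_simp
      have hrel' : hjcf s * (hjcf ((b₁ - 1) :: t) - 1) = hjcf ((b₁ - 1) :: t) := by
        rw [hbnew]
        linear_combination hjcf s * hrel + (q - 1) * eS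
      have hbt2 : ∀ x ∈ (b₁ - 1) :: t, 2 ≤ x := by
        intro x hx
        rcases List.mem_cons.mp hx with h | h
        · subst h; omega
        · exact ht2 x h
      have hIH := ih ((b₁ - 1) :: t) s (by simp at hlen ⊢; omega) (by simp) hsne
        hbt2 hs2 hrel'
      simp only [List.map_cons, List.sum_cons] at hIH ⊢
      have hcast : ((b₁ - 1 : ℤ) : ℚ) = (b₁ : ℚ) - 1 := by push_cast; ring
      rw [hcast] at hIH
      have hccast : (c₁ : ℚ) = 2 := by rw [hc₁2]; norm_num
      rw [hccast]
      linarith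

/-- For `n ≥ 2` and `1 ≤ a ≤ n−1` with `gcd(a,n) = 1`, writing, for a cyclic
quotient singularity `1/n (1,q)` with inverse `q'` of `q` mod `n` and
Hirzebruch–Jung expansion `n/q = [b₁,…,b_l]`,
`γ(1/n(1,q)) = (1/6)((q+q')/n + Σᵢ(bᵢ−3))`, one has
`γ(1/n(1,a)) = −γ(1/n(1,n−a))`. -/
theorem gamma_dual (n a a' c' : ℤ) (hn : 2 ≤ n) (ha : 1 ≤ a) (han : a ≤ n - 1)
    (hgcd : Int.gcd a n = 1)
    -- `a'` is the inverse of `a` mod `n`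
    (ha' : 1 ≤ a') (ha'n : a' ≤ n - 1) (hinv : a * a' ≡ 1 [ZMOD n])
    -- `c'` is the inverse of `n − a` mod `n`
    (hc' : 1 ≤ c') (hc'n : c' ≤ n - 1) (hinv' : (n - a) * c' ≡ 1 [ZMOD n])
    -- `b` is the Hirzebruch–Jung expansion of `n/a`
    (b : List ℤ) (hbne : b ≠ []) (hb2 : ∀ x ∈ b, 2 ≤ x)
    (hbval : hjcf b = (n : ℚ) / (a : ℚ))
    -- `c` is the Hirzebruch–Jung expansion of `n/(n−a)`
    (c : List ℤ) (hcne : c ≠ []) (hc2 : ∀ x ∈ c, 2 ≤ x)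
    (hcval : hjcf c = (n : ℚ) / ((n : ℚ) - (a : ℚ))) :
    1 / 6 * (((a : ℚ) + (a' : ℚ)) / (n : ℚ) + (b.map (fun x => (x : ℚ) - 3)).sum) =
      -(1 / 6 * ((((n : ℚ) - (a : ℚ)) + (c' : ℚ)) / (n : ℚ) +
        (c.map (fun x => (x : ℚ) - 3)).sum)) := by
  have hn0 : (0:ℚ) < (n:ℚ) := by exact_mod_cast (by omega : (0:ℤ) < n)
  have ha0 : (0:ℚ) < (a:ℚ) := by exact_mod_cast (by omega : (0:ℤ) < a)
  have haln : (a:ℚ) < (n:ℚ) := by exact_mod_cast (by omega : a < n)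
  have hna0 : (0:ℚ) < (n:ℚ) - (a:ℚ) := by linarith
  have hrel : hjcf c * (hjcf b - 1) = hjcf b := by
    rw [hbval, hcval]
    field_simp
  have hk := key (b.length + c.length) b c le_rfl hbne hcne hb2 hc2 hrel
  -- show c' = n - a'
  obtain ⟨k1, hk1⟩ := hinv.dvd
  obtain ⟨k2, hk2⟩ := hinv'.dvd
  have h5 : a * (c' + a') = n * (k2 + c' - k1) := by linear_combination hk2 - hk1
  have hcop : IsCoprime (n:ℤ) a := Int.isCoprime_iff_gcd_eq_one.mpr (by rw [Int.gcd_comm]; exact hgcd)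
  have h6 : n ∣ c' + a' := hcop.dvd_of_dvd_mul_left ⟨k2 + c' - k1, h5⟩
  obtain ⟨k, hk'⟩ := h6
  have hklb : 1 ≤ k := by nlinarith
  have hkub : k ≤ 1 := by nlinarith
  have hce : c' = n - a' := by
    have : k = 1 := le_antisymm hkub hklb
    subst this; omega
  have hc'cast : (c' : ℚ) = (n:ℚ) - (a':ℚ) := by rw [hce]; push_cast; ring
  rw [sum_cast b, sum_cast c, hc'cast]
  have hn' : (n:ℚ) ≠ 0 := ne_of_gt hn0
  field_simp
  linear_combination (n:ℚ) * hk
end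

section
/- Let 𝕋(7,3,3) be the group presented by generators c₁, c₂, c₃ subject to the relations c₁⁷ = c₂³ = c₃³ = c₁c₂c₃ = 1. Then there exists a surjective group homomorphism φ : 𝕋(7,3,3) → PSL(2,7) such that orderOf φ(c₁) = 7, orderOf φ(c₂) = 3, and orderOf φ(c₃) = 3. -/
/-- The relators of the polygonal group `𝕋(7,3,3)`:
`c₁⁷, c₂³, c₃³, c₁c₂c₃`. -/
def rels733 : Set (FreeGroup (Fin 3)) :=
  {FreeGroup.of 0 ^ 7, FreeGroup.of 1 ^ 3, FreeGroup.of 2 ^ 3,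
    FreeGroup.of 0 * FreeGroup.of 1 * FreeGroup.of 2}

/-- The polygonal group `𝕋(7,3,3) = ⟨c₁,c₂,c₃ ∣ c₁⁷ = c₂³ = c₃³ = c₁c₂c₃ = 1⟩`. -/
abbrev T733 : Type := PresentedGroup rels733

/-- `PSL(2,7)`: the quotient of `SL(2, ℤ/7ℤ)` by its center. -/
abbrev PSL27 :=
  Matrix.SpecialLinearGroup (Fin 2) (ZMod 7) ⧸
    Subgroup.center (Matrix.SpecialLinearGroup (Fin 2) (ZMod 7))

/- Auxiliary material -/

abbrev SL7 := Matrix.SpecialLinearGroup (Fin 2) (ZMod 7)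

instance : DecidableEq SL7 := fun a b => decidable_of_iff (a.1 = b.1) Subtype.ext_iff.symm

/-- Upper unitriangular matrices in `SL(2,7)`. -/
def uu (x : ZMod 7) : SL7 := ⟨!![1, x; 0, 1], by simp [Matrix.det_fin_two_of]⟩
/-- Lower unitriangular matrices in `SL(2,7)`. -/
def ll (x : ZMod 7) : SL7 := ⟨!![1, 0; x, 1], by simp [Matrix.det_fin_two_of]⟩
/-- The image of the first generator: order 7. -/
def Um : SL7 := uu 1
def Lm : SL7 := ll 1
/-- The image of the second generator: order 3. -/
def Bm : SL7 := ⟨!![0, 3; 2, 6], by decide⟩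
/-- The image of the third generator: order 3 in `PSL(2,7)` (it cubes to `-1`). -/
def Cm : SL7 := ⟨!![6, 5; 5, 2], by decide⟩
/-- `-1` in `SL(2,7)`. -/
def Nm : SL7 := ⟨!![6, 0; 0, 6], by decide⟩

/-- Candidate Bruhat-type decomposition of an element of `SL(2,7)` with
nonvanishing lower-left entry. -/
def w1 (g : SL7) : SL7 :=
  uu ((g.1 0 0 - 1) * (g.1 1 0) ^ 5) * ll (g.1 1 0) * uu ((g.1 1 1 - 1) * (g.1 1 0) ^ 5)

set_option maxRecDepth 40000 in
/-- Every element of `SL(2,7)` is a product of unitriangular matrices. -/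
lemma decomp : ∀ g : SL7,
    (g.1 1 0 ≠ 0 ∧ g = w1 g) ∨ (g.1 1 0 = 0 ∧ g = w1 (g * ll 1) * (ll 1)⁻¹) := by decide

lemma hUm7 : Um ^ 7 = 1 := by decide
lemma hBm3 : Bm ^ 3 = 1 := by decide
lemma hCm3 : Cm ^ 3 = Nm := by decide
lemma hUBC : Um * Bm * Cm = 1 := by decide
lemma hword : Bm * Um⁻¹ * Um⁻¹ * Bm⁻¹ = Lm := by decide
lemma hu' : ∀ t : ZMod 7, Um ^ t.val = uu t := by decide
lemma hl' : ∀ t : ZMod 7, Lm ^ t.val = ll t := by decide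
lemma hnU : ¬ (ll 1 * Um = Um * ll 1) := by decide
lemma hnB : ¬ (ll 1 * Bm = Bm * ll 1) := by decide
lemma hnC : ¬ (ll 1 * Cm = Cm * ll 1) := by decide

lemma Nm_mem_center : Nm ∈ Subgroup.center SL7 := by
  rw [Subgroup.mem_center_iff]
  intro g
  have hNm : (Nm : Matrix (Fin 2) (Fin 2) (ZMod 7)) = (6 : ZMod 7) • 1 := by
    ext i j
    fin_cases i <;> fin_cases j <;> simp [Nm, Matrix.one_apply]
  ext i j
  simp only [Matrix.SpecialLinearGroup.coe_mul, hNm, Matrix.smul_mul, Matrix.mul_smul,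
    Matrix.one_mul, Matrix.mul_one]

/-- The quotient map `SL(2,7) → PSL(2,7)`. -/
def pi7 : SL7 →* PSL27 := QuotientGroup.mk' _

lemma pi7_eq_one_iff (g : SL7) : pi7 g = 1 ↔ g ∈ Subgroup.center SL7 :=
  QuotientGroup.eq_one_iff g

/-- The images of the three generators. -/
def fgen : Fin 3 → PSL27 := ![pi7 Um, pi7 Bm, pi7 Cm]

lemma fgen_rels : ∀ r ∈ rels733, FreeGroup.lift fgen r = 1 := by
  intro r hr
  simp only [rels733, Set.mem_insert_iff, Set.mem_singleton_iff] at hr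
  rcases hr with rfl | rfl | rfl | rfl
  · rw [map_pow, FreeGroup.lift_apply_of]
    show (pi7 Um) ^ 7 = 1
    rw [← map_pow]
    rw [hUm7, map_one]
  · rw [map_pow, FreeGroup.lift_apply_of]
    show (pi7 Bm) ^ 3 = 1
    rw [← map_pow]
    rw [hBm3, map_one]
  · rw [map_pow, FreeGroup.lift_apply_of]
    show (pi7 Cm) ^ 3 = 1
    rw [← map_pow]
    rw [hCm3, pi7_eq_one_iff]
    exact Nm_mem_center
  · rw [map_mul, map_mul, FreeGroup.lift_apply_of, FreeGroup.lift_apply_of, FreeGroup.lift_apply_of]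
    show pi7 Um * pi7 Bm * pi7 Cm = 1
    rw [← map_mul, ← map_mul]
    rw [hUBC, map_one]

lemma order_of_pi7 {g : SL7} {p : ℕ} [Fact p.Prime] (hg : g ^ p = 1)
    (hgc : g ∉ Subgroup.center SL7) : orderOf (pi7 g) = p := by
  refine orderOf_eq_prime ?_ ?_
  · rw [← map_pow, hg, map_one]
  · rw [Ne, pi7_eq_one_iff]
    exact hgc

/-- There is a surjective homomorphism `𝕋(7,3,3) → PSL(2,7)` sending the
generators `c₁, c₂, c₃` to elements of orders exactly `7, 3, 3`
(an appropriate orbifold homomorphism). -/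
theorem exists_appropriate_orbifold_hom_733 :
    ∃ φ : T733 →* PSL27, Function.Surjective φ ∧
      orderOf (φ (PresentedGroup.of 0)) = 7 ∧
      orderOf (φ (PresentedGroup.of 1)) = 3 ∧
      orderOf (φ (PresentedGroup.of 2)) = 3 := by
  haveI : Fact (Nat.Prime 7) := ⟨by norm_num⟩
  haveI : Fact (Nat.Prime 3) := ⟨by norm_num⟩
  refine ⟨PresentedGroup.toGroup fgen_rels, ?_, ?_, ?_, ?_⟩
  · -- surjectivity
    set φ := PresentedGroup.toGroup fgen_rels with hφ
    intro y
    obtain ⟨x, rfl⟩ := QuotientGroup.mk'_surjective (Subgroup.center SL7) y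
    have hx : x ∈ Subgroup.comap pi7 φ.range := by
      have hU : Um ∈ Subgroup.comap pi7 φ.range := by
        refine ⟨PresentedGroup.of 0, ?_⟩
        exact PresentedGroup.toGroup.of fgen_rels
      have hB : Bm ∈ Subgroup.comap pi7 φ.range := by
        refine ⟨PresentedGroup.of 1, ?_⟩
        exact PresentedGroup.toGroup.of fgen_rels
      have hL : Lm ∈ Subgroup.comap pi7 φ.range := by
        rw [← hword]
        exact mul_mem (mul_mem (mul_mem hB (inv_mem hU)) (inv_mem hU)) (inv_mem hB)
      have huu : ∀ t : ZMod 7, uu t ∈ Subgroup.comap pi7 φ.range := by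
        intro t
        rw [← hu' t]
        exact pow_mem hU _
      have hll : ∀ t : ZMod 7, ll t ∈ Subgroup.comap pi7 φ.range := by
        intro t
        rw [← hl' t]
        exact pow_mem hL _
      rcases decomp x with ⟨_, h⟩ | ⟨_, h⟩
      · rw [h]
        exact mul_mem (mul_mem (huu _) (hll _)) (huu _)
      · rw [h]
        exact mul_mem (mul_mem (mul_mem (huu _) (hll _)) (huu _)) (inv_mem (hll 1))
    exact hx
  · have h0 : PresentedGroup.toGroup fgen_rels (PresentedGroup.of 0) = pi7 Um :=
      PresentedGroup.toGroup.of fgen_rels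
    rw [h0]
    refine order_of_pi7 (p := 7) hUm7 ?_
    intro h
    exact hnU (Subgroup.mem_center_iff.1 h (ll 1))
  · have h1 : PresentedGroup.toGroup fgen_rels (PresentedGroup.of 1) = pi7 Bm :=
      PresentedGroup.toGroup.of fgen_rels
    rw [h1]
    refine order_of_pi7 (p := 3) hBm3 ?_
    intro h
    exact hnB (Subgroup.mem_center_iff.1 h (ll 1))
  · have h2 : PresentedGroup.toGroup fgen_rels (PresentedGroup.of 2) = pi7 Cm :=
      PresentedGroup.toGroup.of fgen_rels
    rw [h2]
    refine orderOf_eq_prime ?_ ?_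
    · rw [← map_pow, hCm3, pi7_eq_one_iff]
      exact Nm_mem_center
    · rw [Ne, pi7_eq_one_iff]
      intro h
      exact hnC (Subgroup.mem_center_iff.1 h (ll 1))
end
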